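/- arXiv:1811.07019 — 3 statements merged into one kernel-verified Lean document; each statement's English description precedes it below -/
import Mathlib

section
/- For all natural numbers l ≥ 9 and all r with 2 ≤ r ≤ l/2, one has 2^(l-r+1) · (l choose (r-1)) ≥ 16 · (l choose 4). -/
lemma choose_mono_half (n a b : ℕ) (hab : a ≤ b) (hb : b ≤ n / 2) :
    Nat.choose n a ≤ Nat.choose n b := by
  induction b, hab using Nat.le_induction with
  | base => exact le_refl _
  | succ k hk ih =>
    have hk2 : k < n / 2 := lt_of_lt_of_le (Nat.lt_succ_self k) hb
    exact le_trans (ih (le_of_lt hk2)) (Nat.choose_le_succ_of_lt_half_left hk2)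

lemma pow_growth (l : ℕ) (hl : 9 ≤ l) : 2 * (l - 1) * (l - 2) * (l - 3) ≤ 3 * 2 ^ (l - 1) := by
  induction l, hl using Nat.le_induction with
  | base => norm_num
  | succ m hm ih =>
    have hpow : 3 * 2 ^ (m + 1 - 1) = 2 * (3 * 2 ^ (m - 1)) := by
      have h : m + 1 - 1 = (m - 1) + 1 := by omega
      rw [h, pow_succ]; ring
    rw [hpow]
    calc 2 * (m + 1 - 1) * (m + 1 - 2) * (m + 1 - 3)
        = 2 * m * (m - 1) * (m - 2) := by
          have e1 : m + 1 - 1 = m := by omega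
          have e2 : m + 1 - 2 = m - 1 := by omega
          have e3 : m + 1 - 3 = m - 2 := by omega
          rw [e1, e2, e3]
      _ ≤ 2 * (2 * (m - 1) * (m - 2) * (m - 3)) := by
          have hm' : m ≤ 2 * (m - 3) := by omega
          calc 2 * m * (m - 1) * (m - 2) = m * (2 * (m - 1) * (m - 2)) := by ring
            _ ≤ (2 * (m - 3)) * (2 * (m - 1) * (m - 2)) :=
                Nat.mul_le_mul_right _ hm'
            _ = 2 * (2 * (m - 1) * (m - 2) * (m - 3)) := by ring
      _ ≤ 2 * (3 * 2 ^ (m - 1)) := Nat.mul_le_mul_left 2 ih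

lemma small_case (l : ℕ) (hl : 9 ≤ l) : 16 * Nat.choose l 4 ≤ 2 ^ (l - 3) * (4 * l) := by
  have hdesc : Nat.choose l 4 * 24 = l * (l - 1) * (l - 2) * (l - 3) := by
    have h := Nat.descFactorial_eq_factorial_mul_choose l 4
    have h2 : l.descFactorial 4 = (l - 3) * ((l - 2) * ((l - 1) * (l * 1))) := rfl
    have h3 : Nat.factorial 4 = 24 := rfl
    rw [h3] at h
    rw [Nat.mul_comm, ← h, h2]; ring
  have hp : 2 ^ (l - 1) = 4 * 2 ^ (l - 3) := by
    have h : l - 1 = (l - 3) + 2 := by omega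
    rw [h, pow_add]; ring
  have hg := pow_growth l hl
  rw [hp] at hg
  have key : 16 * Nat.choose l 4 * 24 ≤ 2 ^ (l - 3) * (4 * l) * 24 := by
    calc 16 * Nat.choose l 4 * 24 = 16 * (Nat.choose l 4 * 24) := by ring
      _ = 16 * (l * ((l - 1) * (l - 2) * (l - 3))) := by rw [hdesc]; ring
      _ = 8 * l * (2 * (l - 1) * (l - 2) * (l - 3)) := by ring
      _ ≤ 8 * l * (3 * (4 * 2 ^ (l - 3))) := Nat.mul_le_mul_left _ hg
      _ = 2 ^ (l - 3) * (4 * l) * 24 := by ring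
  exact Nat.le_of_mul_le_mul_right key (by norm_num)

theorem orbit_bound_r (l r : ℕ) (hl : 9 ≤ l) (hr : 2 ≤ r) (hrl : 2 * r ≤ l) :
    2 ^ (l - r + 1) * Nat.choose l (r - 1) ≥ 16 * Nat.choose l 4 := by
  rcases le_or_gt r 4 with h4 | h4
  · -- r ∈ {2,3,4}
    refine le_trans (small_case l hl) ?_
    interval_cases r
    · -- r = 2
      have hp : 2 ^ (l - 2 + 1) = 4 * 2 ^ (l - 3) := by
        have h : l - 2 + 1 = (l - 3) + 2 := by omega
        rw [h, pow_add]; ring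
      rw [hp]
      have hc1 : Nat.choose l (2 - 1) = l := by norm_num
      rw [hc1]
      exact le_of_eq (by ring)
    · -- r = 3
      have hp : 2 ^ (l - 3 + 1) = 2 * 2 ^ (l - 3) := by rw [pow_succ]; ring
      rw [hp]
      have hc : 2 * l ≤ Nat.choose l 2 := by
        rw [Nat.choose_two_right, Nat.le_div_iff_mul_le (by norm_num)]
        have h9 : 4 ≤ l - 1 := by omega
        calc 2 * l * 2 = l * 4 := by ring
          _ ≤ l * (l - 1) := Nat.mul_le_mul_left _ h9
      calc 2 ^ (l - 3) * (4 * l) = 2 * 2 ^ (l - 3) * (2 * l) := by ring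
        _ ≤ 2 * 2 ^ (l - 3) * Nat.choose l 2 := Nat.mul_le_mul_left _ hc
    · -- r = 4
      have hc : 4 * l ≤ Nat.choose l 3 := by
        have hdesc : Nat.choose l 3 * 6 = l * (l - 1) * (l - 2) := by
          have h := Nat.descFactorial_eq_factorial_mul_choose l 3
          have h2 : l.descFactorial 3 = (l - 2) * ((l - 1) * (l * 1)) := rfl
          have h3 : Nat.factorial 3 = 6 := rfl
          rw [h3] at h
          rw [Nat.mul_comm, ← h, h2]; ring
        have hq : (l - 1) * (l - 2) ≥ 24 := by
          calc (l - 1) * (l - 2) ≥ 8 * 7 := Nat.mul_le_mul (by omega) (by omega)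
            _ ≥ 24 := by norm_num
        have : 4 * l * 6 ≤ Nat.choose l 3 * 6 := by
          rw [hdesc]
          calc 4 * l * 6 = l * 24 := by ring
            _ ≤ l * ((l - 1) * (l - 2)) := Nat.mul_le_mul_left _ hq
            _ = l * (l - 1) * (l - 2) := by ring
        exact Nat.le_of_mul_le_mul_right this (by norm_num)
      have he : l - 4 + 1 = l - 3 := by omega
      simp only [he]
      exact Nat.mul_le_mul_left _ hc
  · -- r ≥ 5
    have h1 : 16 ≤ 2 ^ (l - r + 1) := by
      calc (16 : ℕ) = 2 ^ 4 := by norm_num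
        _ ≤ 2 ^ (l - r + 1) := Nat.pow_le_pow_right (by norm_num) (by omega)
    have h2 : Nat.choose l 4 ≤ Nat.choose l (r - 1) :=
      choose_mono_half l 4 (r - 1) (by omega) (by omega)
    exact Nat.mul_le_mul h1 h2
end

section
/- For all natural numbers l ≥ 7 and all k with 4 ≤ k ≤ (l+1)/2, one has 2^k · (l choose k) ≥ 16 · (l choose 4). -/
theorem orbit_bound_k (l k : ℕ) (hl : 7 ≤ l) (hk : 4 ≤ k) (hkl : 2 * k ≤ l + 1) :
    2 ^ k * Nat.choose l k ≥ 16 * Nat.choose l 4 := by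
  induction k, hk using Nat.le_induction with
  | base => norm_num
  | succ k hk4 ih =>
    have hkl' : 2 * k ≤ l + 1 := by omega
    have ih' := ih hkl'
    have key : Nat.choose l (k+1) * (k+1) = Nat.choose l k * (l - k) :=
      Nat.choose_succ_right_eq l k
    have h2 : Nat.choose l k ≤ 2 * Nat.choose l (k+1) := by
      have hl2 : k + 1 ≤ 2 * (l - k) := by omega
      nlinarith [key, hl2, Nat.choose_pos (show k ≤ l by omega)]
    calc 16 * Nat.choose l 4 ≤ 2 ^ k * Nat.choose l k := ih'
      _ ≤ 2 ^ k * (2 * Nat.choose l (k+1)) := Nat.mul_le_mul_left _ h2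
      _ = 2 ^ (k+1) * Nat.choose l (k+1) := by ring
end

section
/- For every natural number l ≥ 9, setting m = ⌊(l+2)/2⌋, one has 2^m · (l choose m) ≥ 16 · (l choose 4). -/
lemma choose_mono_half_s6 (l a : ℕ) : ∀ b, a ≤ b → b ≤ l / 2 →
    Nat.choose l a ≤ Nat.choose l b := by
  intro b
  induction b with
  | zero => intro h _; simp [Nat.le_zero.mp h]
  | succ n ih =>
    intro hab hb
    rcases Nat.eq_or_lt_of_le hab with h | h
    · rw [h]
    · exact le_trans (ih (by omega) (by omega))
        (Nat.choose_le_succ_of_lt_half_left (by omega))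

theorem orbit_bound_mid (l : ℕ) (hl : 9 ≤ l) :
    2 ^ ((l + 2) / 2) * Nat.choose l ((l + 2) / 2) ≥ 16 * Nat.choose l 4 := by
  have h1 : Nat.choose l ((l + 2) / 2) = Nat.choose l (l - (l + 2) / 2) := by
    rw [← Nat.choose_symm (show (l+2)/2 ≤ l by omega)]
  have h2 : l - (l + 2) / 2 = (l - 1) / 2 := by omega
  have h3 : Nat.choose l 4 ≤ Nat.choose l ((l - 1) / 2) :=
    choose_mono_half_s6 l 4 _ (by omega) (by omega)
  have h4 : (16 : ℕ) ≤ 2 ^ ((l + 2) / 2) := by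
    calc (16 : ℕ) = 2 ^ 4 := by norm_num
    _ ≤ 2 ^ ((l + 2) / 2) := Nat.pow_le_pow_right (by norm_num) (by omega)
  rw [h1, h2]
  exact Nat.mul_le_mul h4 h3
end
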